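/- Let ω : ℝ → ℝ³ be twice continuously differentiable, set Ω(t) = [ω(t)]×, and let R : ℝ → SO(3) be differentiable with dR/dt = R(t)Ω(t). Define A(t) = [[0, I₃, 0], [0, 0, −R(t)], [0, 0, 0]] (9×9 blocks), the block matrix Ξ(t) = [[0, 0, I₃], [0, I₃, RΩRᵀ], [−Rᵀ, −ΩRᵀ, −(Ω² − Ω̇)Rᵀ]] whose block columns are denoted γ₁, γ₂, γ₃, and γ₄(t) = A(t)γ₃(t) − (d/dt)γ₃(t). Then Ξ(t) is invertible for every t, and A(t)Ξ(t) − (d/dt)Ξ(t) = Ξ(t) A_o + γ₄(t) C_o, where A_o = [[0,0,0],[I₃,0,0],[0,I₃,0]] and C_o = [0, 0, I₃]. -/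

import Mathlib

open Matrix Filter Real Topology

noncomputable section

/-- `M ⪯ 0`: a real matrix is negative semidefinite iff `-M` is positive semidefinite. -/
def Matrix.NegSemidef {n : Type*} [Fintype n] (M : Matrix n n ℝ) : Prop := (-M).PosSemidef

/-- `M ≺ 0`: a real matrix is negative definite iff `-M` is positive definite. -/
def Matrix.NegDef {n : Type*} [Fintype n] (M : Matrix n n ℝ) : Prop := (-M).PosDef

/-- ℝ³ with the Euclidean norm. -/
abbrev E3 := EuclideanSpace ℝ (Fin 3)

/-- 3×3 real matrices. -/
abbrev M3 := Matrix (Fin 3) (Fin 3) ℝ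

/-- Index type used for 9-dimensional block vectors/matrices with 3×3 blocks. -/
abbrev I9 := Fin 3 ⊕ (Fin 3 ⊕ Fin 3)

/-- `R ∈ SO(3)`, i.e. `RᵀR = I₃` and `det R = 1`. -/
def SO3 (R : M3) : Prop := Rᵀ * R = 1 ∧ R.det = 1

/-- The skew-symmetric matrix `[w]ₓ` with `[w]ₓ u = w × u`. -/
def skew (w : E3) : M3 :=
  !![0, -w 2, w 1; w 2, 0, -w 0; -w 1, w 0, 0]

/-- 9×9 block matrix built from nine 3×3 blocks. -/
def blk3 (a b c d e f g h i : M3) : Matrix I9 I9 ℝ :=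
  Matrix.of fun x y =>
    match x, y with
    | .inl x, .inl y => a x y
    | .inl x, .inr (.inl y) => b x y
    | .inl x, .inr (.inr y) => c x y
    | .inr (.inl x), .inl y => d x y
    | .inr (.inl x), .inr (.inl y) => e x y
    | .inr (.inl x), .inr (.inr y) => f x y
    | .inr (.inr x), .inl y => g x y
    | .inr (.inr x), .inr (.inl y) => h x y
    | .inr (.inr x), .inr (.inr y) => i x y

/-- 3×9 block row matrix built from three 3×3 blocks. -/
def rowblk (a b c : M3) : Matrix (Fin 3) I9 ℝ :=
  Matrix.of fun x y =>
    match y with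
    | .inl y => a x y
    | .inr (.inl y) => b x y
    | .inr (.inr y) => c x y

/-- 9×3 block column matrix built from three 3×3 blocks. -/
def colblk (a b c : M3) : Matrix I9 (Fin 3) ℝ :=
  Matrix.of fun x y =>
    match x with
    | .inl x => a x y
    | .inr (.inl x) => b x y
    | .inr (.inr x) => c x y

/-- 9×9 matrix assembled from three 9×3 block columns. -/
def cols3 (a b c : Matrix I9 (Fin 3) ℝ) : Matrix I9 I9 ℝ :=
  Matrix.of fun x y =>
    match y with
    | .inl y => a x y
    | .inr (.inl y) => b x y
    | .inr (.inr y) => c x y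

/-- 9×9 matrix assembled from three 3×9 block rows. -/
def rows3 (a b c : Matrix (Fin 3) I9 ℝ) : Matrix I9 I9 ℝ :=
  Matrix.of fun x y =>
    match x with
    | .inl x => a x y
    | .inr (.inl x) => b x y
    | .inr (.inr x) => c x y

lemma blk3_mul (a b c d e f g h i a' b' c' d' e' f' g' h' i' : M3) :
    blk3 a b c d e f g h i * blk3 a' b' c' d' e' f' g' h' i' =
    blk3 (a*a'+b*d'+c*g') (a*b'+b*e'+c*h') (a*c'+b*f'+c*i')
         (d*a'+e*d'+f*g') (d*b'+e*e'+f*h') (d*c'+e*f'+f*i')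
         (g*a'+h*d'+i*g') (g*b'+h*e'+i*h') (g*c'+h*f'+i*i') := by
  ext x y
  rcases x with x | x | x <;> rcases y with y | y | y <;>
    simp [blk3, Matrix.mul_apply, Fintype.sum_sum_type, Finset.sum_add_distrib] <;> ring

lemma blk3_mul_colblk (a b c d e f g h i x y z : M3) :
    blk3 a b c d e f g h i * colblk x y z =
    colblk (a*x+b*y+c*z) (d*x+e*y+f*z) (g*x+h*y+i*z) := by
  ext p q
  rcases p with p | p | p <;>
    simp [blk3, colblk, Matrix.mul_apply, Fintype.sum_sum_type, Finset.sum_add_distrib] <;> ring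

lemma colblk_mul_rowblk (x y z p q r : M3) :
    colblk x y z * rowblk p q r =
    blk3 (x*p) (x*q) (x*r) (y*p) (y*q) (y*r) (z*p) (z*q) (z*r) := by
  ext u v
  rcases u with u | u | u <;> rcases v with v | v | v <;>
    simp [blk3, colblk, rowblk, Matrix.mul_apply]

lemma blk3_sub (a b c d e f g h i a' b' c' d' e' f' g' h' i' : M3) :
    blk3 a b c d e f g h i - blk3 a' b' c' d' e' f' g' h' i' =
    blk3 (a-a') (b-b') (c-c') (d-d') (e-e') (f-f') (g-g') (h-h') (i-i') := by
  ext x y; rcases x with x | x | x <;> rcases y with y | y | y <;> simp [blk3]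

lemma blk3_add (a b c d e f g h i a' b' c' d' e' f' g' h' i' : M3) :
    blk3 a b c d e f g h i + blk3 a' b' c' d' e' f' g' h' i' =
    blk3 (a+a') (b+b') (c+c') (d+d') (e+e') (f+f') (g+g') (h+h') (i+i') := by
  ext x y; rcases x with x | x | x <;> rcases y with y | y | y <;> simp [blk3]

lemma colblk_sub (x y z x' y' z' : M3) :
    colblk x y z - colblk x' y' z' = colblk (x-x') (y-y') (z-z') := by
  ext p q; rcases p with p | p | p <;> simp [colblk]

lemma one_blk3 : (1 : Matrix I9 I9 ℝ) = blk3 1 0 0 0 1 0 0 0 1 := by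
  ext x y; rcases x with x | x | x <;> rcases y with y | y | y <;>
    simp [blk3, Matrix.one_apply, Sum.inl.injEq, Sum.inr.injEq]

lemma blk3_congr {a b c d e f g h i a' b' c' d' e' f' g' h' i' : M3}
    (h1 : a = a') (h2 : b = b') (h3 : c = c') (h4 : d = d') (h5 : e = e')
    (h6 : f = f') (h7 : g = g') (h8 : h = h') (h9 : i = i') :
    blk3 a b c d e f g h i = blk3 a' b' c' d' e' f' g' h' i' := by
  rw [h1, h2, h3, h4, h5, h6, h7, h8, h9]

lemma skew_transpose (w : E3) : (skew w)ᵀ = -skew w := by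
  ext i j; fin_cases i <;> fin_cases j <;> simp [skew]

lemma hasDerivAt_entry_mul {f g : ℝ → M3} {F G : M3} {t : ℝ}
    (hf : ∀ i j, HasDerivAt (fun s => f s i j) (F i j) t)
    (hg : ∀ i j, HasDerivAt (fun s => g s i j) (G i j) t)
    (i j : Fin 3) :
    HasDerivAt (fun s => (f s * g s) i j) ((F * g t + f t * G) i j) t := by
  have h := HasDerivAt.fun_sum (u := Finset.univ)
    (fun k _ => ((hf i k).mul (hg k j)))
  simpa [Matrix.mul_apply, Matrix.add_apply, Finset.sum_add_distrib] using h

lemma hasDerivAt_skew_entry (ω ω' : ℝ → E3) (hω : ∀ t, HasDerivAt ω (ω' t) t)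
    (t : ℝ) (i j : Fin 3) :
    HasDerivAt (fun s => skew (ω s) i j) (skew (ω' t) i j) t := by
  have hc : ∀ k : Fin 3, HasDerivAt (fun s => ω s k) (ω' t k) t := by
    intro k
    exact ((EuclideanSpace.proj k : E3 →L[ℝ] ℝ).hasFDerivAt).comp_hasDerivAt t (hω t)
  fin_cases i <;> fin_cases j <;>
    simp [skew] <;>
    first
      | exact hasDerivAt_const _ _
      | exact hc _
      | exact (hc _).neg


/-- Intertwining identity transforming the time-varying translation-error
dynamics into observable canonical form: with `Ω = [ω]ₓ` (`ω` twice continuously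
differentiable), `Ṙ = RΩ`, `A(t) = [[0,I₃,0],[0,0,−R(t)],[0,0,0]]`,
`Ξ(t) = [[0,0,I₃],[0,I₃,RΩRᵀ],[−Rᵀ,−ΩRᵀ,−(Ω²−Ω̇)Rᵀ]]` with block columns `γ₁,γ₂,γ₃` and
`γ₄ = Aγ₃ − γ̇₃`, the matrix `Ξ(t)` is invertible for every `t` and
`A(t)Ξ(t) − Ξ̇(t) = Ξ(t)A_o + γ₄(t)C_o`, where `A_o = [[0,0,0],[I₃,0,0],[0,I₃,0]]` and
`C_o = [0,0,I₃]`. -/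
theorem stmt_12 (ω ω' ω'' : ℝ → E3)
    (hω : ∀ t, HasDerivAt ω (ω' t) t) (hω' : ∀ t, HasDerivAt ω' (ω'' t) t)
    (hω'' : Continuous ω'')
    (R : ℝ → M3) (hSO : ∀ t, SO3 (R t))
    (hR : ∀ t i j, HasDerivAt (fun s => R s i j) ((R t * skew (ω t)) i j) t) :
    ∀ t : ℝ,
      let A : ℝ → Matrix I9 I9 ℝ := fun s => blk3 0 1 0 0 0 (-(R s)) 0 0 0
      let Ξ : ℝ → Matrix I9 I9 ℝ := fun s =>
        blk3 0 0 1
             0 1 (R s * skew (ω s) * (R s)ᵀ)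
             (-(R s)ᵀ) (-(skew (ω s) * (R s)ᵀ))
             (-((skew (ω s) * skew (ω s) - skew (ω' s)) * (R s)ᵀ))
      let γ₃ : ℝ → Matrix I9 (Fin 3) ℝ := fun s =>
        colblk 1 (R s * skew (ω s) * (R s)ᵀ)
          (-((skew (ω s) * skew (ω s) - skew (ω' s)) * (R s)ᵀ))
      let γ₄ : ℝ → Matrix I9 (Fin 3) ℝ := fun s =>
        A s * γ₃ s - Matrix.of fun i j => deriv (fun τ => γ₃ τ i j) s
      let Aₒ : Matrix I9 I9 ℝ := blk3 0 0 0 1 0 0 0 1 0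
      let Cₒ : Matrix (Fin 3) I9 ℝ := rowblk 0 0 1
      IsUnit (Ξ t) ∧
      A t * Ξ t - (Matrix.of fun i j => deriv (fun τ => Ξ τ i j) t) =
        Ξ t * Aₒ + γ₄ t * Cₒ := by
  intro t A Ξ γ₃ γ₄ Aₒ Cₒ
  simp only [A, Ξ, γ₃, γ₄, Aₒ, Cₒ]
  obtain ⟨hRT1, -⟩ := hSO t
  have hRRT : R t * (R t)ᵀ = 1 := mul_eq_one_comm.mp hRT1
  have hsT : (skew (ω t))ᵀ = -skew (ω t) := skew_transpose (ω t)
  have hΩd : ∀ i j, HasDerivAt (fun s => skew (ω s) i j) (skew (ω' t) i j) t :=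
    hasDerivAt_skew_entry ω ω' hω t
  have hRd : ∀ i j, HasDerivAt (fun s => R s i j) ((R t * skew (ω t)) i j) t := hR t
  have hRTd : ∀ i j, HasDerivAt (fun s => (R s)ᵀ i j) (((R t * skew (ω t))ᵀ) i j) t :=
    fun i j => by simpa [Matrix.transpose_apply] using hRd j i
  have hΩRT : ∀ i j, HasDerivAt (fun s => (skew (ω s) * (R s)ᵀ) i j)
      ((skew (ω' t) * (R t)ᵀ + skew (ω t) * (R t * skew (ω t))ᵀ) i j) t :=
    fun i j => hasDerivAt_entry_mul hΩd hRTd i j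
  have hΞder : (Matrix.of fun i j =>
      deriv
        (fun τ =>
          blk3 0 0 1 0 1 (R τ * skew (ω τ) * (R τ)ᵀ) (-(R τ)ᵀ) (-(skew (ω τ) * (R τ)ᵀ))
            (-((skew (ω τ) * skew (ω τ) - skew (ω' τ)) * (R τ)ᵀ)) i j)
        t) =
      blk3 0 0 0 0 0
        (Matrix.of fun i j => deriv (fun τ => (R τ * skew (ω τ) * (R τ)ᵀ) i j) t)
        (-(R t * skew (ω t))ᵀ)
        (-(skew (ω' t) * (R t)ᵀ + skew (ω t) * (R t * skew (ω t))ᵀ))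
        (Matrix.of fun i j =>
          deriv (fun τ => (-((skew (ω τ) * skew (ω τ) - skew (ω' τ)) * (R τ)ᵀ)) i j) t) := by
    ext x y
    rcases x with x | x | x <;> rcases y with y | y | y <;>
      simp only [blk3, Matrix.of_apply]
    · simp
    · simp
    · simp [Matrix.one_apply]
    · simp
    · simp [Matrix.one_apply]
    · exact ((hRTd x y).neg).deriv
    · exact ((hΩRT x y).neg).deriv
  have hγder : (Matrix.of fun i j =>
      deriv
        (fun τ =>
          colblk 1 (R τ * skew (ω τ) * (R τ)ᵀ) (-((skew (ω τ) * skew (ω τ) - skew (ω' τ)) * (R τ)ᵀ)) i j)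
        t) =
      colblk 0
        (Matrix.of fun i j => deriv (fun τ => (R τ * skew (ω τ) * (R τ)ᵀ) i j) t)
        (Matrix.of fun i j =>
          deriv (fun τ => (-((skew (ω τ) * skew (ω τ) - skew (ω' τ)) * (R τ)ᵀ)) i j) t) := by
    ext x y
    rcases x with x | x | x <;> simp only [colblk, Matrix.of_apply]
    · simp [Matrix.one_apply]
  constructor
  · -- invertibility of Ξ t
    have hc : ∀ X : M3, (R t)ᵀ * (R t * X) = X := fun X => by
      rw [← mul_assoc, hRT1, one_mul]
    set Bt : M3 := R t * skew (ω t) * (R t)ᵀ with hBt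
    set Ct : M3 := -((skew (ω t) * skew (ω t) - skew (ω' t)) * (R t)ᵀ) with hCt
    have hM : blk3 0 0 1 0 1 Bt (-(R t)ᵀ) (-(skew (ω t) * (R t)ᵀ)) Ct *
        blk3 (R t * (skew (ω t) * (R t)ᵀ * Bt + Ct)) (-Bt) (-(R t))
             (-Bt) 1 0
             1 0 0 = 1 := by
      rw [blk3_mul, one_blk3]
      apply blk3_congr
      · noncomm_ring
      · noncomm_ring
      · noncomm_ring
      · noncomm_ring
      · noncomm_ring
      · noncomm_ring
      · simp only [hBt, hCt, neg_mul, mul_neg, neg_mul_neg, neg_neg, mul_one, mul_zero,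
          zero_mul, one_mul, add_zero, zero_add, mul_assoc, hc]
        noncomm_ring
      · simp only [hBt, hCt, neg_mul, mul_neg, neg_mul_neg, neg_neg, mul_one, mul_zero,
          zero_mul, one_mul, add_zero, zero_add, mul_assoc, hc]
        abel
      · simp only [neg_mul, mul_neg, neg_mul_neg, neg_neg, mul_one, mul_zero, zero_mul,
          one_mul, add_zero, zero_add, hRT1]
    exact ⟨⟨_, _, hM, mul_eq_one_comm.mp hM⟩, rfl⟩
  · rw [hΞder, hγder, blk3_mul, blk3_mul, blk3_mul_colblk, colblk_sub,
      colblk_mul_rowblk, blk3_sub, blk3_add]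
    apply blk3_congr
    · noncomm_ring
    · noncomm_ring
    · noncomm_ring
    · rw [neg_mul_neg, hRRT]; noncomm_ring
    · noncomm_ring
    · noncomm_ring
    · rw [Matrix.transpose_mul, hsT]; noncomm_ring
    · rw [Matrix.transpose_mul, hsT]; noncomm_ring
    · noncomm_ring
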